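/- Let 𝓗 be a Clar formula of an extremal fullerene graph F_n with n ≥ 60, and let M be the perfect matching F_n − 𝓗 (which consists of (n − 6·|𝓗|)/2 edges). Then a face f of F_n is a pentagon if and only if there exists an edge e ∈ M such that e meets f (shares a vertex with f) but e is not an edge of f. -/

import Mathlib

namespace FG

/-- A combinatorial plane (spherically embedded) graph: a finite simple graph together with
its collection of faces, each face recorded as the finset of edges of its boundary cycle.
Every face boundary is a cycle, every edge lies on exactly two faces, and Euler's formula
holds (edges are counted via the face incidences). -/
structure PlaneGraph (V : Type) [Fintype V] [DecidableEq V] : Type where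
  graph : SimpleGraph V
  faces : Finset (Finset (Sym2 V))
  face_edges : ∀ f ∈ faces, ∀ e ∈ f, e ∈ graph.edgeSet
  face_cycle : ∀ f ∈ faces, ∃ (v : V) (c : graph.Walk v v), c.IsCycle ∧ c.edges.toFinset = f
  edge_faces : ∀ e ∈ graph.edgeSet, (faces.filter (fun f => e ∈ f)).card = 2
  euler : 2 * (Fintype.card V + faces.card) = (∑ f ∈ faces, f.card) + 4

variable {V : Type} [Fintype V] [DecidableEq V]

/-- The vertices incident with at least one edge of an edge set. -/
def edgeVerts (E : Finset (Sym2 V)) : Finset V :=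
  Finset.univ.filter fun v => ∃ e ∈ E, v ∈ e

/-- The degree of a vertex in the subgraph spanned by an edge set. -/
def deg (E : Finset (Sym2 V)) (v : V) : ℕ := (E.filter fun e => v ∈ e).card

/-- The vertices covered by a collection of faces. -/
def facesVerts (H : Finset (Finset (Sym2 V))) : Finset V := edgeVerts (H.sup id)

/-- An edge set is a matching: non-loop edges, pairwise vertex-disjoint. -/
def IsMatching (M : Finset (Sym2 V)) : Prop :=
  (∀ e ∈ M, ¬e.IsDiag) ∧ ∀ e ∈ M, ∀ e' ∈ M, e ≠ e' → ∀ v : V, v ∈ e → v ∉ e'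

/-- A fullerene graph: a cubic 3-connected plane graph with (exactly 12) pentagonal
faces and hexagonal faces. -/
structure IsFullerene (P : PlaneGraph V) : Prop where
  cubic : ∀ v : V, (P.graph.neighborSet v).ncard = 3
  threeConnected : ∀ s : Set V, s.ncard ≤ 2 → (SimpleGraph.induce sᶜ P.graph).Connected
  faceSize : ∀ f ∈ P.faces, f.card = 5 ∨ f.card = 6
  pentTwelve : (P.faces.filter fun f => f.card = 5).card = 12

/-- A fragment of a plane graph: a nonempty set of faces (a cycle together with its
interior) whose boundary — the set of edges lying on exactly one chosen face — is a
single cycle. -/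
structure Fragment (P : PlaneGraph V) : Type where
  inFaces : Finset (Finset (Sym2 V))
  nonempty : inFaces.Nonempty
  subFaces : inFaces ⊆ P.faces
  boundary_cycle : ∃ (v : V) (c : P.graph.Walk v v), c.IsCycle ∧
    c.edges.toFinset =
      (inFaces.sup id).filter fun e => (inFaces.filter fun f => e ∈ f).card = 1

/-- The edge set of a fragment. -/
def Fragment.edges {P : PlaneGraph V} (B : Fragment P) : Finset (Sym2 V) := B.inFaces.sup id

/-- The boundary edges of a fragment. -/
def Fragment.boundary {P : PlaneGraph V} (B : Fragment P) : Finset (Sym2 V) :=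
  B.edges.filter fun e => (B.inFaces.filter fun f => e ∈ f).card = 1

/-- A pentagonal fragment: all inner faces are pentagons. -/
def IsPentagonalFragment {P : PlaneGraph V} (B : Fragment P) : Prop :=
  ∀ f ∈ B.inFaces, f.card = 5

/-- The faces of `P` adjoining the subgraph with edge set `E`: not a face of the
subgraph, but sharing at least one edge with it. -/
def adjoiningFaces (P : PlaneGraph V) (E : Finset (Sym2 V)) : Finset (Finset (Sym2 V)) :=
  P.faces.filter fun f => ¬f ⊆ E ∧ (f ∩ E).Nonempty

/-- The territory `T[G]` of the subgraph with edge set `E`: the subgraph together with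
all adjoining faces. -/
def territoryEdges (P : PlaneGraph V) (E : Finset (Sym2 V)) : Finset (Sym2 V) :=
  E ∪ (adjoiningFaces P E).sup id

/-- `w(G)`: the number of 2-degree vertices of the subgraph spanned by `E`. -/
def wcount (E : Finset (Sym2 V)) : ℕ := ((edgeVerts E).filter fun v => deg E v = 2).card

/-- A subgraph is maximal in `P` when its hexagon extension is contained in `P`,
i.e. every adjoining face is a hexagon. -/
def IsMaximalIn (P : PlaneGraph V) (E : Finset (Sym2 V)) : Prop :=
  ∀ f ∈ adjoiningFaces P E, f.card = 6

/-- `H ∈ 𝒮(G)` for the subgraph `G` with edge set `E`: `H` is a set of mutually disjoint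
hexagons of the hexagon extension `H[G]` (hexagonal faces sharing at least one edge with
`G`) such that `G − H` has a matching covering all remaining 3-degree vertices of `G`. -/
def SextetAdm (P : PlaneGraph V) (E : Finset (Sym2 V)) (H : Finset (Finset (Sym2 V))) : Prop :=
  (∀ f ∈ H, f ∈ P.faces ∧ f.card = 6 ∧ (f ∩ E).Nonempty) ∧
  (∀ f ∈ H, ∀ g ∈ H, f ≠ g → Disjoint (edgeVerts f) (edgeVerts g)) ∧
  ∃ M : Finset (Sym2 V), M ⊆ E ∧ IsMatching M ∧
    (∀ e ∈ M, ∀ v : V, v ∈ e → v ∉ facesVerts H) ∧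
    ∀ v ∈ edgeVerts E, deg E v = 3 → v ∉ facesVerts H → ∃ e ∈ M, v ∈ e

/-- `U_H(G) = V(G) ∖ V(H)`. -/
def Uset (E : Finset (Sym2 V)) (H : Finset (Finset (Sym2 V))) : Finset V :=
  edgeVerts E \ facesVerts H

/-- A Clar set of `H[G]`: a member of `𝒮(G)` minimizing `|U_H(G)|`. -/
def IsClarSet (P : PlaneGraph V) (E : Finset (Sym2 V)) (H : Finset (Finset (Sym2 V))) : Prop :=
  SextetAdm P E H ∧ ∀ H', SextetAdm P E H' → (Uset E H).card ≤ (Uset E H').card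

/-- A normal Clar set: a Clar set such that `G − H` has a perfect matching. -/
def IsNormalClarSet (P : PlaneGraph V) (E : Finset (Sym2 V))
    (H : Finset (Finset (Sym2 V))) : Prop :=
  IsClarSet P E H ∧ ∃ M : Finset (Sym2 V), M ⊆ E ∧ IsMatching M ∧
    (∀ e ∈ M, ∀ v : V, v ∈ e → v ∉ facesVerts H) ∧
    ∀ v ∈ Uset E H, ∃ e ∈ M, v ∈ e

/-- The pentagonal faces of the subgraph with edge set `E`. -/
def pentFaces (P : PlaneGraph V) (E : Finset (Sym2 V)) : Finset (Finset (Sym2 V)) :=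
  P.faces.filter fun f => f.card = 5 ∧ f ⊆ E

/-- A subgraph with `k` pentagons is extremal if `|U_H(G)| = k` for a Clar set `H`. -/
def IsExtremalSub (P : PlaneGraph V) (E : Finset (Sym2 V)) : Prop :=
  ∃ H, IsClarSet P E H ∧ (Uset E H).card = (pentFaces P E).card

/-- A pentagonal ring `R_k`: `k` pentagonal faces `R 0, …, R (k-1)` such that
`R i` and `R j` intersect iff `|i − j| = 1 (mod k)`. -/
def IsPentRing (P : PlaneGraph V) (k : ℕ) (R : ZMod k → Finset (Sym2 V)) : Prop :=
  Function.Injective R ∧ (∀ i, R i ∈ P.faces ∧ (R i).card = 5) ∧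
  ∀ i j : ZMod k, i ≠ j →
    ((edgeVerts (R i) ∩ edgeVerts (R j)).Nonempty ↔ (j = i + 1 ∨ i = j + 1))

/-- The number of pentagons of the pentagonal fragment `B` adjoining (sharing an edge
with) the pentagon `p`. -/
def pentAdjCount {P : PlaneGraph V} (B : Fragment P) (p : Finset (Sym2 V)) : ℕ :=
  (B.inFaces.filter fun q => q ≠ p ∧ (q ∩ p).Nonempty).card

/-- The fragment consisting of a single pentagon `P`. -/
def IsPentagonFrag {P : PlaneGraph V} (B : Fragment P) : Prop :=
  IsPentagonalFragment B ∧ B.inFaces.card = 1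

/-- `B_2`: the extremal pentagonal fragment with 4 pentagons whose Clar extension is
normal. -/
def IsB2Frag {P : PlaneGraph V} (B : Fragment P) : Prop :=
  IsPentagonalFragment B ∧ B.inFaces.card = 4 ∧ IsExtremalSub P B.edges ∧
    ∃ H, IsNormalClarSet P B.edges H

/-- `B_3`: the extremal pentagonal fragment with 6 pentagons whose Clar extension is
normal. -/
def IsB3Frag {P : PlaneGraph V} (B : Fragment P) : Prop :=
  IsPentagonalFragment B ∧ B.inFaces.card = 6 ∧ IsExtremalSub P B.edges ∧
    ∃ H, IsNormalClarSet P B.edges H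

/-- A pasting edge of the subgraph with edge set `E`: an edge of `E` lying on the
boundary of the Clar extension `C[G]` (not an edge of a Clar hexagon) whose two
end-vertices belong to `V(H)` for a Clar set `H`. -/
def IsPastingEdge (P : PlaneGraph V) (E : Finset (Sym2 V)) (e : Sym2 V) : Prop :=
  e ∈ E ∧ ∃ H, IsClarSet P E H ∧ (∀ v : V, v ∈ e → v ∈ facesVerts H) ∧ e ∉ H.sup id

/-- `B` arises from pasting `A` and `C` along a common pasting edge:
`B = A ∪ C` and `A ∩ C` is a single pasting edge of both. -/
def IsPasting {P : PlaneGraph V} (B A C : Fragment P) : Prop :=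
  B.inFaces = A.inFaces ∪ C.inFaces ∧
  ∃ e : Sym2 V, A.edges ∩ C.edges = {e} ∧ IsPastingEdge P A.edges e ∧ IsPastingEdge P C.edges e

def IsBasicFrag {P : PlaneGraph V} (B : Fragment P) : Prop :=
  IsPentagonFrag B ∨ IsB2Frag B ∨ IsB3Frag B

/-- The pentagonal fragments generated from `P`, `B_2`, `B_3` by the pasting operation. -/
inductive Pasted (P : PlaneGraph V) : Fragment P → Prop
  | base (B : Fragment P) : IsBasicFrag B → Pasted P B
  | paste (B A C : Fragment P) : Pasted P A → IsBasicFrag C → IsPasting B A C → Pasted P B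

/-- `P ∗ P`. -/
def IsPPFrag {P : PlaneGraph V} (B : Fragment P) : Prop :=
  ∃ A C : Fragment P, IsPentagonFrag A ∧ IsPentagonFrag C ∧ IsPasting B A C

/-- `P ∗ B_2`. -/
def IsPB2Frag {P : PlaneGraph V} (B : Fragment P) : Prop :=
  ∃ A C : Fragment P, IsPentagonFrag A ∧ IsB2Frag C ∧ IsPasting B A C

/-- `P ∗ B_2 ∗ P`. -/
def IsPB2PFrag {P : PlaneGraph V} (B : Fragment P) : Prop :=
  ∃ B' A C D : Fragment P, IsPentagonFrag A ∧ IsB2Frag C ∧ IsPentagonFrag D ∧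
    IsPasting B' A C ∧ IsPasting B B' D

/-- The six members of `𝓑_{≥60}`. -/
def SixShapes {P : PlaneGraph V} (B : Fragment P) : Prop :=
  IsPentagonFrag B ∨ IsB2Frag B ∨ IsB3Frag B ∨ IsPPFrag B ∨ IsPB2Frag B ∨ IsPB2PFrag B

/-- `B_1`: two vertex-disjoint pentagons joined by an edge. -/
def IsB1 (P : PlaneGraph V) (E : Finset (Sym2 V)) : Prop :=
  ∃ (f g : Finset (Sym2 V)) (a b : V), f ∈ P.faces ∧ g ∈ P.faces ∧ f.card = 5 ∧ g.card = 5 ∧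
    Disjoint (edgeVerts f) (edgeVerts g) ∧ P.graph.Adj a b ∧
    a ∈ edgeVerts f ∧ b ∈ edgeVerts g ∧ E = f ∪ g ∪ {s(a, b)}

/-- `B_1^k`: `k` copies of `B_1` pasted together along pasting edges of their pentagons. -/
inductive B1Pow (P : PlaneGraph V) : ℕ → Finset (Sym2 V) → Prop
  | one (E : Finset (Sym2 V)) : IsB1 P E → B1Pow P 1 E
  | succ (k : ℕ) (E X : Finset (Sym2 V)) (e : Sym2 V) (f g : Finset (Sym2 V)) :
      B1Pow P k E → IsB1 P X → E ∩ X = {e} → f ∈ P.faces → g ∈ P.faces →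
      f.card = 5 → g.card = 5 → f ⊆ E → g ⊆ X → e ∈ f → e ∈ g →
      IsPastingEdge P f e → IsPastingEdge P g e → B1Pow P (k + 1) (E ∪ X)

/-- `F` contains `B_1^k` for some `2 ≤ k ≤ 4` as a subgraph. -/
def ContainsB1Pow (P : PlaneGraph V) : Prop :=
  ∃ (k : ℕ) (E : Finset (Sym2 V)), 2 ≤ k ∧ k ≤ 4 ∧ B1Pow P k E

/-- A perfect matching of the plane graph `P`. -/
def IsPerfectMatching (P : PlaneGraph V) (M : Finset (Sym2 V)) : Prop :=
  (∀ e ∈ M, e ∈ P.graph.edgeSet) ∧ IsMatching M ∧ ∀ v : V, ∃ e ∈ M, v ∈ e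

/-- A sextet pattern of `P`: mutually disjoint hexagonal faces, all alternating with
respect to a common perfect matching. -/
def IsSextetPattern (P : PlaneGraph V) (H : Finset (Finset (Sym2 V))) : Prop :=
  (∀ f ∈ H, f ∈ P.faces ∧ f.card = 6) ∧
  (∀ f ∈ H, ∀ g ∈ H, f ≠ g → Disjoint (edgeVerts f) (edgeVerts g)) ∧
  ∃ M : Finset (Sym2 V), IsPerfectMatching P M ∧ ∀ f ∈ H, (f ∩ M).card = 3

/-- A Clar formula: a maximum sextet pattern. -/
def IsClarFormula (P : PlaneGraph V) (H : Finset (Finset (Sym2 V))) : Prop :=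
  IsSextetPattern P H ∧ ∀ H', IsSextetPattern P H' → H'.card ≤ H.card

/-- An extremal fullerene graph: the Clar number equals `(n − 12)/6`. -/
def IsExtremalFullerene (P : PlaneGraph V) : Prop :=
  ∃ H, IsClarFormula P H ∧ 6 * H.card = Fintype.card V - 12

/-- The edges of the union of all maximal pentagonal fragments of `P`. -/
noncomputable def maxPentEdges (P : PlaneGraph V) : Finset (Sym2 V) :=
  @Finset.filter _
    (fun e => ∃ B : Fragment P, IsPentagonalFragment B ∧ IsMaximalIn P B.edges ∧ e ∈ B.edges)
    (Classical.decPred _) (P.faces.sup id)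

/-- The disjoint union of two copies of `K_2`. -/
def twoK2 : SimpleGraph (Fin 4) := SimpleGraph.fromEdgeSet {s(0, 1), s(2, 3)}

/-- The tree `T_0` on six vertices: two adjacent 3-degree vertices, each also adjacent
to two leaves. -/
def treeT0 : SimpleGraph (Fin 6) :=
  SimpleGraph.fromEdgeSet {s(0, 1), s(0, 2), s(0, 3), s(1, 4), s(1, 5)}


section AuxWalk

open SimpleGraph

variable {G : SimpleGraph V}

omit [Fintype V] [DecidableEq V] in
lemma exists_edge_of_mem_support {u w : V} (p : G.Walk u w) (hnil : ¬ p.Nil)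
    {v : V} (hv : v ∈ p.support) : ∃ e ∈ p.edges, v ∈ e := by
  induction p with
  | nil => simp at hnil
  | @cons a x b h q ih =>
    rw [SimpleGraph.Walk.support_cons, List.mem_cons] at hv
    rcases hv with rfl | hv
    · exact ⟨s(v, x), by simp [SimpleGraph.Walk.edges_cons], by simp⟩
    · by_cases hq : q.Nil
      · rw [SimpleGraph.Walk.nil_iff_support_eq] at hq
        rw [hq, List.mem_singleton] at hv
        subst hv
        exact ⟨s(a, v), by simp [SimpleGraph.Walk.edges_cons], by simp⟩
      · obtain ⟨e, he, hve⟩ := ih hq hv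
        exact ⟨e, by simp [SimpleGraph.Walk.edges_cons, he], hve⟩

omit [Fintype V] [DecidableEq V] in
lemma mem_support_of_mem_edge {u w : V} (p : G.Walk u w) {e : Sym2 V} (he : e ∈ p.edges)
    {v : V} (hv : v ∈ e) : v ∈ p.support := by
  induction e with
  | _ x y =>
    rw [Sym2.mem_iff] at hv
    rcases hv with rfl | rfl
    · exact p.fst_mem_support_of_mem_edges he
    · exact p.snd_mem_support_of_mem_edges he

omit [Fintype V] in
lemma endpoint_filter_length {a b : V} (p : G.Walk a b) (hnodup : p.support.Nodup)
    (hnil : ¬ p.Nil) : (p.edges.filter (fun e => decide (b ∈ e))).length = 1 := by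
  induction p with
  | nil => simp at hnil
  | @cons a x b h q ih =>
    rw [Walk.support_cons, List.nodup_cons] at hnodup
    obtain ⟨ha, hq⟩ := hnodup
    by_cases hqn : q.Nil
    · have hxb : x = b := hqn.eq
      subst hxb
      have : q.edges = [] := by
        have := (Walk.nil_iff_length_eq).mp hqn
        have : q.edges.length = 0 := by rw [Walk.length_edges]; exact this
        exact List.length_eq_zero_iff.mp this
      simp [Walk.edges_cons, this]
    · have hb : b ∈ q.support := q.end_mem_support
      have hba : b ≠ a := fun hh => ha (hh ▸ hb)
      have hbx : b ≠ x := by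
        intro hh
        have htail : b ∈ q.support.tail := by
          rw [← Walk.support_tail_of_not_nil q hqn]
          exact Walk.end_mem_support _
        rw [q.support_eq_cons, List.nodup_cons] at hq
        exact hq.1 (hh ▸ htail)
      have hnot : ¬ (b ∈ s(a, x)) := by
        rw [Sym2.mem_iff]; push_neg; exact ⟨hba, hbx⟩
      rw [Walk.edges_cons, List.filter_cons]
      rw [if_neg (by simpa using hnot)]
      exact ih hq hqn

omit [Fintype V] in
lemma cycle_deg_two_base {v : V} (c : G.Walk v v) (hc : c.IsCycle) :
    (c.edges.toFinset.filter (fun e => v ∈ e)).card = 2 := by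
  have hnodup : c.edges.Nodup := hc.edges_nodup
  have h1 : c.edges.toFinset.filter (fun e => v ∈ e)
      = (c.edges.filter (fun e => decide (v ∈ e))).toFinset := by
    rw [List.toFinset_filter]
    apply Finset.filter_congr
    intro e _
    simp
  rw [h1, List.toFinset_card_of_nodup (hnodup.filter _)]
  cases c with
  | nil => exact absurd hc Walk.IsCycle.not_of_nil
  | @cons a x b h q =>
    have hq : q.support.Nodup := by
      have := hc.support_nodup
      rwa [Walk.support_cons, List.tail_cons] at this
    have hqn : ¬ q.Nil := Walk.not_nil_of_ne (Ne.symm h.ne)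
    rw [Walk.edges_cons, List.filter_cons]
    rw [if_pos (by simp)]
    rw [List.length_cons, endpoint_filter_length q hq hqn]

omit [Fintype V] in
lemma cycle_deg_two {u : V} (c : G.Walk u u) (hc : c.IsCycle) {v : V} (hv : v ∈ c.support) :
    (c.edges.toFinset.filter (fun e => v ∈ e)).card = 2 := by
  have hrot : (c.rotate v hv).edges.toFinset = c.edges.toFinset := by
    ext e; simp only [List.mem_toFinset]; exact (c.rotate_edges v hv).perm.mem_iff
  rw [← hrot]
  exact cycle_deg_two_base (c.rotate v hv) (hc.rotate hv)

omit [Fintype V] in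
lemma cycle_support_toFinset_card {u : V} (c : G.Walk u u) (hc : c.IsCycle) :
    c.support.toFinset.card = c.edges.toFinset.card := by
  rw [List.toFinset_card_of_nodup hc.edges_nodup, Walk.length_edges]
  cases c with
  | nil => exact absurd hc Walk.IsCycle.not_of_nil
  | cons h q =>
    have hq : q.support.Nodup := by
      have := hc.support_nodup
      rwa [Walk.support_cons, List.tail_cons] at this
    have hu := q.end_mem_support
    rw [Walk.support_cons, List.toFinset_cons, Finset.insert_eq_self.mpr (by simpa using hu),
      List.toFinset_card_of_nodup hq, Walk.length_support, Walk.length_cons]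

end AuxWalk

section AuxFinset

open scoped Classical

lemma mem_edgeVerts {E : Finset (Sym2 V)} {v : V} : v ∈ edgeVerts E ↔ ∃ e ∈ E, v ∈ e := by
  simp [edgeVerts]

lemma double_count_v (A : Finset V) (E : Finset (Sym2 V)) :
    ∑ v ∈ A, (E.filter (fun e => v ∈ e)).card = ∑ e ∈ E, (A.filter (fun v => v ∈ e)).card := by
  simp only [Finset.card_filter]
  exact Finset.sum_comm

lemma double_count_f (F : Finset (Finset (Sym2 V))) (E : Finset (Sym2 V)) :
    ∑ f ∈ F, (E.filter (fun e => e ∈ f)).card = ∑ e ∈ E, (F.filter (fun f => e ∈ f)).card := by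
  simp only [Finset.card_filter]
  exact Finset.sum_comm

lemma card_eq_two_mul_aux (A : Finset V) (E : Finset (Sym2 V))
    (h1 : ∀ v ∈ A, (E.filter (fun e => v ∈ e)).card = 1)
    (h2 : ∀ e ∈ E, (A.filter (fun v => v ∈ e)).card = 2) : A.card = 2 * E.card := by
  have h := double_count_v A E
  rw [Finset.sum_congr rfl h1, Finset.sum_congr rfl h2] at h
  simp only [Finset.sum_const, smul_eq_mul, mul_one] at h
  omega

lemma sym2_mem_filter_card {x y : V} (hxy : x ≠ y) :
    (Finset.univ.filter (fun v => v ∈ s(x, y))).card = 2 := by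
  have h : Finset.univ.filter (fun v : V => v ∈ s(x, y)) = {x, y} := by
    ext v; simp [Sym2.mem_iff]
  rw [h, Finset.card_insert_of_notMem (by simp [hxy]), Finset.card_singleton]

end AuxFinset
section AuxPlane

open scoped Classical

lemma face_deg_two (P : PlaneGraph V) {f : Finset (Sym2 V)} (hf : f ∈ P.faces) {v : V}
    (hv : v ∈ edgeVerts f) : (f.filter (fun e => v ∈ e)).card = 2 := by
  obtain ⟨u, c, hc, hce⟩ := P.face_cycle f hf
  subst hce
  rw [mem_edgeVerts] at hv
  obtain ⟨e, he, hve⟩ := hv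
  exact cycle_deg_two c hc (mem_support_of_mem_edge c (List.mem_toFinset.mp he) hve)

lemma face_verts_card (P : PlaneGraph V) {f : Finset (Sym2 V)} (hf : f ∈ P.faces) :
    (edgeVerts f).card = f.card := by
  obtain ⟨u, c, hc, hce⟩ := P.face_cycle f hf
  subst hce
  have h : edgeVerts c.edges.toFinset = c.support.toFinset := by
    ext v
    rw [mem_edgeVerts]
    constructor
    · rintro ⟨e, he, hve⟩
      exact List.mem_toFinset.mpr (mem_support_of_mem_edge c (List.mem_toFinset.mp he) hve)
    · intro hv
      obtain ⟨e, he, hve⟩ := exists_edge_of_mem_support c hc.not_nil (List.mem_toFinset.mp hv)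
      exact ⟨e, List.mem_toFinset.mpr he, hve⟩
  rw [h, cycle_support_toFinset_card c hc]

lemma edges_at_card (P : PlaneGraph V) (hP3 : ∀ v : V, (P.graph.neighborSet v).ncard = 3)
    (v : V) :
    (Finset.univ.filter (fun e : Sym2 V => e ∈ P.graph.edgeSet ∧ v ∈ e)).card = 3 := by
  have himg : Finset.univ.filter (fun e : Sym2 V => e ∈ P.graph.edgeSet ∧ v ∈ e)
      = (P.graph.neighborSet v).toFinset.image (fun u => s(v, u)) := by
    ext e
    simp only [Finset.mem_filter, Finset.mem_univ, true_and, Finset.mem_image,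
      Set.mem_toFinset, SimpleGraph.mem_neighborSet]
    constructor
    · rintro ⟨hes, hve⟩
      induction e with
      | _ x y =>
        rw [Sym2.mem_iff] at hve
        rw [P.graph.mem_edgeSet] at hes
        rcases hve with rfl | rfl
        · exact ⟨y, hes, rfl⟩
        · exact ⟨x, hes.symm, Sym2.eq_swap⟩
    · rintro ⟨u, hu, rfl⟩
      exact ⟨(P.graph.mem_edgeSet).mpr hu, by simp⟩
  rw [himg, Finset.card_image_of_injective _ (fun a b hab => Sym2.congr_right.mp hab),
    ← Set.ncard_eq_toFinset_card']
  exact hP3 v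

lemma faces_at_card (P : PlaneGraph V) (hP3 : ∀ v : V, (P.graph.neighborSet v).ncard = 3)
    (v : V) : (P.faces.filter (fun f => v ∈ edgeVerts f)).card = 3 := by
  set Ev := Finset.univ.filter (fun e : Sym2 V => e ∈ P.graph.edgeSet ∧ v ∈ e) with hEv
  have hkey : ∀ f ∈ P.faces, Ev.filter (fun e => e ∈ f) = f.filter (fun e => v ∈ e) := by
    intro f hf
    ext e
    simp only [hEv, Finset.mem_filter, Finset.mem_univ, true_and]
    constructor
    · rintro ⟨⟨_, hve⟩, hef⟩; exact ⟨hef, hve⟩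
    · rintro ⟨hef, hve⟩; exact ⟨⟨P.face_edges f hf e hef, hve⟩, hef⟩
  have h6 : ∑ f ∈ P.faces, (Ev.filter (fun e => e ∈ f)).card = 6 := by
    rw [double_count_f]
    have : ∀ e ∈ Ev, (P.faces.filter (fun f => e ∈ f)).card = 2 := by
      intro e he
      rw [hEv] at he
      simp only [Finset.mem_filter, Finset.mem_univ, true_and] at he
      exact P.edge_faces e he.1
    rw [Finset.sum_congr rfl this]
    have : Ev.card = 3 := edges_at_card P hP3 v
    simp [this]
  have hsplit := Finset.sum_filter_add_sum_filter_not P.faces (fun f => v ∈ edgeVerts f)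
    (fun f => (Ev.filter (fun e => e ∈ f)).card)
  have hzero : ∑ f ∈ P.faces.filter (fun f => ¬ v ∈ edgeVerts f),
      (Ev.filter (fun e => e ∈ f)).card = 0 := by
    apply Finset.sum_eq_zero
    intro f hf
    simp only [Finset.mem_filter] at hf
    rw [Finset.card_eq_zero, Finset.filter_eq_empty_iff]
    intro e he
    rw [hEv] at he
    simp only [Finset.mem_filter, Finset.mem_univ, true_and] at he
    intro hef
    exact hf.2 (mem_edgeVerts.mpr ⟨e, hef, he.2⟩)
  have htwo : ∑ f ∈ P.faces.filter (fun f => v ∈ edgeVerts f),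
      (Ev.filter (fun e => e ∈ f)).card
      = 2 * (P.faces.filter (fun f => v ∈ edgeVerts f)).card := by
    rw [Finset.sum_congr rfl (fun f hf => ?_)]
    · rw [Finset.sum_const, smul_eq_mul, mul_comm]
    · simp only [Finset.mem_filter] at hf
      rw [hkey f hf.1, face_deg_two P hf.1 hf.2]
  omega

lemma face_omit_edge_unique (P : PlaneGraph V)
    (hP3 : ∀ v : V, (P.graph.neighborSet v).ncard = 3)
    (v : V) {e₀ : Sym2 V} (he₀ : e₀ ∈ P.graph.edgeSet) (hve : v ∈ e₀) :
    (P.faces.filter (fun f => v ∈ edgeVerts f ∧ e₀ ∉ f)).card = 1 := by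
  have h3 := faces_at_card P hP3 v
  have h2 : (P.faces.filter (fun f => v ∈ edgeVerts f ∧ e₀ ∈ f)).card = 2 := by
    have heq : P.faces.filter (fun f => v ∈ edgeVerts f ∧ e₀ ∈ f)
        = P.faces.filter (fun f => e₀ ∈ f) := by
      apply Finset.filter_congr
      intro f hf
      constructor
      · exact fun h => h.2
      · exact fun h => ⟨mem_edgeVerts.mpr ⟨e₀, h, hve⟩, h⟩
    rw [heq]
    exact P.edge_faces e₀ he₀
  have hsum : (P.faces.filter (fun f => v ∈ edgeVerts f ∧ e₀ ∈ f)).card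
      + (P.faces.filter (fun f => v ∈ edgeVerts f ∧ e₀ ∉ f)).card
      = (P.faces.filter (fun f => v ∈ edgeVerts f)).card := by
    rw [← Finset.filter_filter, ← Finset.filter_filter]
    exact Finset.card_filter_add_card_filter_not _
  omega

end AuxPlane
section AuxPlane2

open scoped Classical

lemma shared_at_vertex_unique (P : PlaneGraph V)
    (hP3 : ∀ v : V, (P.graph.neighborSet v).ncard = 3)
    {f h : Finset (Sym2 V)} (hf : f ∈ P.faces) (hh : h ∈ P.faces) (hne : f ≠ h)
    {v : V} (hvf : v ∈ edgeVerts f) (hvh : v ∈ edgeVerts h) :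
    ((f ∩ h).filter (fun e => v ∈ e)).card = 1 := by
  set Ev := Finset.univ.filter (fun e : Sym2 V => e ∈ P.graph.edgeSet ∧ v ∈ e) with hEv
  set a := f.filter (fun e => v ∈ e) with ha
  set b := h.filter (fun e => v ∈ e) with hb
  have hab : (f ∩ h).filter (fun e => v ∈ e) = a ∩ b := Finset.filter_inter_distrib _ f h
  have ha2 : a.card = 2 := face_deg_two P hf hvf
  have hb2 : b.card = 2 := face_deg_two P hh hvh
  have haE : a ⊆ Ev := by
    intro e he
    rw [ha, Finset.mem_filter] at he
    rw [hEv, Finset.mem_filter]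
    exact ⟨Finset.mem_univ e, P.face_edges f hf e he.1, he.2⟩
  have hbE : b ⊆ Ev := by
    intro e he
    rw [hb, Finset.mem_filter] at he
    rw [hEv, Finset.mem_filter]
    exact ⟨Finset.mem_univ e, P.face_edges h hh e he.1, he.2⟩
  have hE3 : Ev.card = 3 := edges_at_card P hP3 v
  have hnab : a ≠ b := by
    intro hEq
    have hdiff : (Ev \ a).Nonempty := by
      rw [← Finset.card_pos, Finset.card_sdiff_of_subset haE, hE3, ha2]
      norm_num
    obtain ⟨c₀, hc₀⟩ := hdiff
    rw [Finset.mem_sdiff] at hc₀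
    obtain ⟨hc₀E, hc₀a⟩ := hc₀
    rw [hEv, Finset.mem_filter] at hc₀E
    obtain ⟨-, hc₀s, hvc₀⟩ := hc₀E
    have h2f : (P.faces.filter (fun g => c₀ ∈ g)).card = 2 := P.edge_faces c₀ hc₀s
    have hsub : P.faces.filter (fun g => c₀ ∈ g)
        ⊆ (P.faces.filter (fun g => v ∈ edgeVerts g)) \ {f, h} := by
      intro g hg
      rw [Finset.mem_filter] at hg
      rw [Finset.mem_sdiff, Finset.mem_filter]
      refine ⟨⟨hg.1, mem_edgeVerts.mpr ⟨c₀, hg.2, hvc₀⟩⟩, ?_⟩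
      simp only [Finset.mem_insert, Finset.mem_singleton]
      push_neg
      constructor
      · rintro rfl
        exact hc₀a (by rw [ha, Finset.mem_filter]; exact ⟨hg.2, hvc₀⟩)
      · rintro rfl
        apply hc₀a
        rw [hEq, hb, Finset.mem_filter]
        exact ⟨hg.2, hvc₀⟩
    have hfh : ({f, h} : Finset (Finset (Sym2 V)))
        ⊆ P.faces.filter (fun g => v ∈ edgeVerts g) := by
      intro g hg
      simp only [Finset.mem_insert, Finset.mem_singleton] at hg
      rcases hg with rfl | rfl
      · exact Finset.mem_filter.mpr ⟨hf, hvf⟩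
      · exact Finset.mem_filter.mpr ⟨hh, hvh⟩
    have hcard2 : ({f, h} : Finset (Finset (Sym2 V))).card = 2 := by
      rw [Finset.card_insert_of_notMem (by simpa using hne), Finset.card_singleton]
    have := Finset.card_le_card hsub
    rw [Finset.card_sdiff_of_subset hfh, faces_at_card P hP3 v, hcard2, h2f] at this
    omega
  have hle : (a ∩ b).card ≤ 1 := by
    by_contra hcon
    push_neg at hcon
    have h1 : a ∩ b = a := Finset.eq_of_subset_of_card_le Finset.inter_subset_left (by omega)
    have h2 : a ∩ b = b := Finset.eq_of_subset_of_card_le Finset.inter_subset_right (by omega)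
    exact hnab (h1 ▸ h2)
  have hge : 1 ≤ (a ∩ b).card := by
    have hu : (a ∪ b).card ≤ 3 := hE3 ▸ Finset.card_le_card (Finset.union_subset haE hbE)
    have := Finset.card_union_add_card_inter a b
    omega
  rw [hab]; omega

lemma edge_two_endpoints (P : PlaneGraph V) {e : Sym2 V} (he : e ∈ P.graph.edgeSet) :
    (Finset.univ.filter (fun v : V => v ∈ e)).card = 2 := by
  induction e with
  | _ x y =>
    have hxy : x ≠ y := fun hxy => P.graph.irrefl (hxy ▸ (P.graph.mem_edgeSet).mp he)
    exact sym2_mem_filter_card hxy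

end AuxPlane2
section AuxPlane3

open scoped Classical

lemma mem_facesVerts {H : Finset (Finset (Sym2 V))} {v : V} :
    v ∈ facesVerts H ↔ ∃ h ∈ H, v ∈ edgeVerts h := by
  rw [facesVerts, mem_edgeVerts]
  constructor
  · rintro ⟨e, he, hve⟩
    rw [Finset.mem_sup] at he
    obtain ⟨h, hh, hev⟩ := he
    exact ⟨h, hh, mem_edgeVerts.mpr ⟨e, hev, hve⟩⟩
  · rintro ⟨h, hh, hv⟩
    obtain ⟨e, he, hve⟩ := mem_edgeVerts.mp hv
    exact ⟨e, Finset.mem_sup.mpr ⟨h, hh, he⟩, hve⟩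

lemma cov_even (P : PlaneGraph V) (hP3 : ∀ v : V, (P.graph.neighborSet v).ncard = 3)
    {H : Finset (Finset (Sym2 V))} (hfaceH : ∀ h ∈ H, h ∈ P.faces)
    (hdisjH : ∀ h ∈ H, ∀ g ∈ H, h ≠ g → Disjoint (edgeVerts h) (edgeVerts g))
    {f : Finset (Sym2 V)} (hf : f ∈ P.faces) (hfH : f ∉ H) :
    Even ((edgeVerts f).filter (fun v => v ∈ facesVerts H)).card := by
  have hbi : (edgeVerts f).filter (fun v => v ∈ facesVerts H)
      = H.biUnion (fun h => edgeVerts f ∩ edgeVerts h) := by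
    ext v
    simp only [Finset.mem_filter, Finset.mem_biUnion, Finset.mem_inter]
    constructor
    · rintro ⟨hvf, hvH⟩
      obtain ⟨h, hh, hvh⟩ := mem_facesVerts.mp hvH
      exact ⟨h, hh, hvf, hvh⟩
    · rintro ⟨h, hh, hvf, hvh⟩
      exact ⟨hvf, mem_facesVerts.mpr ⟨h, hh, hvh⟩⟩
  have hdisj : ∀ h ∈ H, ∀ g ∈ H, h ≠ g →
      Disjoint (edgeVerts f ∩ edgeVerts h) (edgeVerts f ∩ edgeVerts g) :=
    fun h hh g hg hne => Disjoint.mono Finset.inter_subset_right Finset.inter_subset_right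
      (hdisjH _ hh _ hg hne)
  rw [hbi, Finset.card_biUnion hdisj]
  apply Finset.even_sum
  intro h hh
  have hcard : (edgeVerts f ∩ edgeVerts h).card = 2 * (f ∩ h).card := by
    apply card_eq_two_mul_aux
    · intro v hv
      rw [Finset.mem_inter] at hv
      exact shared_at_vertex_unique P hP3 hf (hfaceH h hh)
        (fun hEq => hfH (hEq ▸ hh)) hv.1 hv.2
    · intro e he
      rw [Finset.mem_inter] at he
      have heq : (edgeVerts f ∩ edgeVerts h).filter (fun v => v ∈ e)
          = Finset.univ.filter (fun v => v ∈ e) := by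
        ext v
        simp only [Finset.mem_filter, Finset.mem_inter, Finset.mem_univ, true_and,
          and_iff_right_iff_imp]
        intro hve
        exact ⟨mem_edgeVerts.mpr ⟨e, he.1, hve⟩, mem_edgeVerts.mpr ⟨e, he.2, hve⟩⟩
      rw [heq]
      exact edge_two_endpoints P (P.face_edges f hf e he.1)
  rw [hcard]
  exact even_two_mul _

end AuxPlane3
section AuxPlane4

open scoped Classical

lemma ins_even (P : PlaneGraph V) {M : Finset (Sym2 V)} (hmatch : IsMatching M)
    (hMedge : ∀ e ∈ M, e ∈ P.graph.edgeSet) {f : Finset (Sym2 V)} :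
    ((edgeVerts f).filter (fun v => ∃ e ∈ M, v ∈ e ∧ e ∈ f)).card
      = 2 * (M.filter (fun e => e ∈ f)).card := by
  apply card_eq_two_mul_aux
  · intro v hv
    rw [Finset.mem_filter] at hv
    obtain ⟨e₀, he₀M, hve₀, he₀f⟩ := hv.2
    have : (M.filter (fun e => e ∈ f)).filter (fun e => v ∈ e) = {e₀} := by
      rw [Finset.eq_singleton_iff_unique_mem]
      constructor
      · simp only [Finset.mem_filter]
        exact ⟨⟨he₀M, he₀f⟩, hve₀⟩
      · intro e he
        simp only [Finset.mem_filter] at he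
        by_contra hne
        exact hmatch.2 e he.1.1 e₀ he₀M hne v he.2 hve₀
    rw [this, Finset.card_singleton]
  · intro e he
    rw [Finset.mem_filter] at he
    have heq : ((edgeVerts f).filter (fun v => ∃ e ∈ M, v ∈ e ∧ e ∈ f)).filter
        (fun v => v ∈ e) = Finset.univ.filter (fun v => v ∈ e) := by
      ext v
      simp only [Finset.mem_filter, Finset.mem_univ, true_and, and_iff_right_iff_imp]
      intro hve
      exact ⟨mem_edgeVerts.mpr ⟨e, he.2, hve⟩, e, he.1, hve, he.2⟩
    rw [heq]
    exact edge_two_endpoints P (hMedge e he.1)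

end AuxPlane4
/-- Proposition 4.1. Let `H` be a Clar formula of an extremal
fullerene graph `F_n` (`n ≥ 60`) and `M := F_n − H` the perfect matching of the
remaining vertices. Then a face `f` of `F_n` is a pentagon if and only if there is an
edge `e ∈ M` with `e ∩ f ≠ ∅` and `e ∉ E(f)`. -/
theorem statement_15 (P : PlaneGraph V) (hP : IsFullerene P)
    (hn : 60 ≤ Fintype.card V) (hext : IsExtremalFullerene P)
    (H : Finset (Finset (Sym2 V))) (hH : IsClarFormula P H)
    (M : Finset (Sym2 V))
    (hM : ∀ e : Sym2 V, e ∈ M ↔ e ∈ P.graph.edgeSet ∧ ∀ v : V, v ∈ e → v ∉ facesVerts H)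
    (hmatch : IsMatching M)
    (hcover : ∀ v : V, v ∉ facesVerts H → ∃ e ∈ M, v ∈ e) :
    ∀ f ∈ P.faces,
      (f.card = 5 ↔ ∃ e ∈ M, e ∉ f ∧ ∃ v : V, v ∈ e ∧ v ∈ edgeVerts f) := by
  classical
  obtain ⟨hpat, hmax⟩ := hH
  have hfaceH6 : ∀ h ∈ H, h ∈ P.faces ∧ h.card = 6 := hpat.1
  have hdisjH : ∀ h ∈ H, ∀ g ∈ H, h ≠ g → Disjoint (edgeVerts h) (edgeVerts g) := hpat.2.1
  have hfaceH' : ∀ h ∈ H, h ∈ P.faces := fun h hh => (hfaceH6 h hh).1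
  have hMedge : ∀ e ∈ M, e ∈ P.graph.edgeSet := fun e he => ((hM e).mp he).1
  have hMcov : ∀ e ∈ M, ∀ v ∈ e, v ∉ facesVerts H := fun e he => ((hM e).mp he).2
  have hMuniq : ∀ (v : V) (e e' : Sym2 V), e ∈ M → e' ∈ M → v ∈ e → v ∈ e' → e = e' := by
    intro v e e' he he' hv hv'
    by_contra hne
    exact hmatch.2 e he e' he' hne v hv hv'
  -- `H` has (n-12)/6 hexagons
  obtain ⟨H₀, hH₀, hcard₀⟩ := hext
  have hHcard : 6 * H.card = Fintype.card V - 12 := by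
    have h1 : H.card ≤ H₀.card := hH₀.2 H hpat
    have h2 : H₀.card ≤ H.card := hmax H₀ hH₀.1
    omega
  -- the vertices covered by `H`
  have hcovcard : (facesVerts H).card = 6 * H.card := by
    have hbi : facesVerts H = H.biUnion (fun h => edgeVerts h) := by
      ext v
      rw [mem_facesVerts, Finset.mem_biUnion]
    rw [hbi, Finset.card_biUnion hdisjH]
    rw [Finset.sum_congr rfl (fun h hh => ?_)]
    · rw [Finset.sum_const, smul_eq_mul, mul_comm]
    · rw [face_verts_card P (hfaceH6 h hh).1, (hfaceH6 h hh).2]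
  have hU : (Finset.univ.filter (fun v : V => v ∉ facesVerts H)).card = 12 := by
    have hcompl : Finset.univ.filter (fun v : V => v ∉ facesVerts H) = (facesVerts H)ᶜ := by
      ext v; simp
    have hle : (facesVerts H).card ≤ Fintype.card V := Finset.card_le_univ _
    rw [hcompl, Finset.card_compl, hcovcard]
    omega
  -- the total number of (vertex, face) incidences with an `M`-edge leaving the face is 12
  have hS : ∑ f ∈ P.faces,
      ((edgeVerts f).filter (fun v => ∃ e ∈ M, v ∈ e ∧ e ∉ f)).card = 12 := by
    have hstep1 : ∀ f ∈ P.faces,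
        ((edgeVerts f).filter (fun v => ∃ e ∈ M, v ∈ e ∧ e ∉ f)).card
          = ∑ v ∈ Finset.univ,
              (if v ∈ edgeVerts f ∧ (∃ e ∈ M, v ∈ e ∧ e ∉ f) then 1 else 0) := by
      intro f _
      have : (edgeVerts f).filter (fun v => ∃ e ∈ M, v ∈ e ∧ e ∉ f)
          = Finset.univ.filter (fun v => v ∈ edgeVerts f ∧ (∃ e ∈ M, v ∈ e ∧ e ∉ f)) := by
        ext v
        simp only [Finset.mem_filter, Finset.mem_univ, true_and]
      rw [this, Finset.card_filter]
    rw [Finset.sum_congr rfl hstep1, Finset.sum_comm]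
    have hstep2 : ∀ v ∈ (Finset.univ : Finset V),
        (∑ f ∈ P.faces, if v ∈ edgeVerts f ∧ (∃ e ∈ M, v ∈ e ∧ e ∉ f) then 1 else 0)
          = (if v ∈ facesVerts H then 0 else 1) := by
      intro v _
      rw [← Finset.card_filter]
      by_cases hv : v ∈ facesVerts H
      · rw [if_pos hv, Finset.card_eq_zero, Finset.filter_eq_empty_iff]
        rintro f _ ⟨_, e, heM, hve, -⟩
        exact hMcov e heM v hve hv
      · rw [if_neg hv]
        obtain ⟨e₀, he₀M, hve₀⟩ := hcover v hv
        have hcongr : P.faces.filter (fun f => v ∈ edgeVerts f ∧ (∃ e ∈ M, v ∈ e ∧ e ∉ f))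
            = P.faces.filter (fun f => v ∈ edgeVerts f ∧ e₀ ∉ f) := by
          apply Finset.filter_congr
          intro f _
          constructor
          · rintro ⟨hvf, e, heM, hve, henf⟩
            exact ⟨hvf, by rw [hMuniq v e₀ e he₀M heM hve₀ hve]; exact henf⟩
          · rintro ⟨hvf, hnf⟩
            exact ⟨hvf, e₀, he₀M, hve₀, hnf⟩
        rw [hcongr]
        exact face_omit_edge_unique P hP.cubic v (hMedge e₀ he₀M) hve₀
    rw [Finset.sum_congr rfl hstep2]
    have : ∀ v ∈ (Finset.univ : Finset V),
        (if v ∈ facesVerts H then 0 else 1) = (if v ∉ facesVerts H then 1 else 0) := by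
      intro v _
      by_cases hv : v ∈ facesVerts H <;> simp [hv]
    rw [Finset.sum_congr rfl this, ← Finset.card_filter, hU]
  -- every pentagon has an `M`-edge leaving it
  have hpent : ∀ f ∈ P.faces, f.card = 5 →
      1 ≤ ((edgeVerts f).filter (fun v => ∃ e ∈ M, v ∈ e ∧ e ∉ f)).card := by
    intro f hf h5
    have hfH : f ∉ H := by
      intro hmem
      have := (hfaceH6 f hmem).2
      omega
    have hcovE := cov_even P hP.cubic hfaceH' hdisjH hf hfH
    have hinsE := ins_even P hmatch hMedge (f := f)
    have hvc : (edgeVerts f).card = 5 := by rw [face_verts_card P hf, h5]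
    have hsplit1 : ((edgeVerts f).filter (fun v => v ∈ facesVerts H)).card
        + ((edgeVerts f).filter (fun v => v ∉ facesVerts H)).card = 5 := by
      rw [← hvc]
      exact Finset.card_filter_add_card_filter_not _
    have hsplit2 : ((edgeVerts f).filter (fun v => v ∉ facesVerts H)).card =
        ((edgeVerts f).filter (fun v => ∃ e ∈ M, v ∈ e ∧ e ∈ f)).card
        + ((edgeVerts f).filter (fun v => ∃ e ∈ M, v ∈ e ∧ e ∉ f)).card := by
      have hA : ((edgeVerts f).filter (fun v => v ∉ facesVerts H)).filter
          (fun v => ∃ e ∈ M, v ∈ e ∧ e ∈ f)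
          = (edgeVerts f).filter (fun v => ∃ e ∈ M, v ∈ e ∧ e ∈ f) := by
        rw [Finset.filter_filter]
        apply Finset.filter_congr
        intro v _
        constructor
        · exact fun h => h.2
        · rintro ⟨e, heM, hve, hef⟩
          exact ⟨hMcov e heM v hve, e, heM, hve, hef⟩
      have hB : ((edgeVerts f).filter (fun v => v ∉ facesVerts H)).filter
          (fun v => ¬ ∃ e ∈ M, v ∈ e ∧ e ∈ f)
          = (edgeVerts f).filter (fun v => ∃ e ∈ M, v ∈ e ∧ e ∉ f) := by
        rw [Finset.filter_filter]
        apply Finset.filter_congr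
        intro v _
        constructor
        · rintro ⟨hcovv, hnins⟩
          obtain ⟨e, heM, hve⟩ := hcover v hcovv
          refine ⟨e, heM, hve, fun hef => hnins ⟨e, heM, hve, hef⟩⟩
        · rintro ⟨e, heM, hve, henf⟩
          refine ⟨hMcov e heM v hve, ?_⟩
          rintro ⟨e', he'M, hve', he'f⟩
          rw [hMuniq v e e' heM he'M hve hve'] at henf
          exact henf he'f
      rw [← hA, ← hB]
      exact (Finset.card_filter_add_card_filter_not _).symm
    obtain ⟨c, hc⟩ := hcovE
    omega
  -- no `M`-edge leaves a hexagon
  have hnot5 : ∀ f ∈ P.faces, f.card ≠ 5 →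
      ((edgeVerts f).filter (fun v => ∃ e ∈ M, v ∈ e ∧ e ∉ f)).card = 0 := by
    intro f hf hne
    have hsplitS := Finset.sum_filter_add_sum_filter_not P.faces (fun f => f.card = 5)
      (fun f => ((edgeVerts f).filter (fun v => ∃ e ∈ M, v ∈ e ∧ e ∉ f)).card)
    have hge : 12 ≤ ∑ f ∈ P.faces.filter (fun f => f.card = 5),
        ((edgeVerts f).filter (fun v => ∃ e ∈ M, v ∈ e ∧ e ∉ f)).card := by
      calc 12 = (P.faces.filter (fun f => f.card = 5)).card := hP.pentTwelve.symm
        _ = ∑ _f ∈ P.faces.filter (fun f => f.card = 5), 1 := by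
            rw [Finset.card_eq_sum_ones]
        _ ≤ _ := Finset.sum_le_sum (fun p hp => hpent p (Finset.mem_filter.mp hp).1
            (Finset.mem_filter.mp hp).2)
    have hz : ∑ f ∈ P.faces.filter (fun f => ¬ f.card = 5),
        ((edgeVerts f).filter (fun v => ∃ e ∈ M, v ∈ e ∧ e ∉ f)).card = 0 := by
      omega
    exact (Finset.sum_eq_zero_iff.mp hz) f (Finset.mem_filter.mpr ⟨hf, hne⟩)
  intro f hf
  constructor
  · intro h5
    have h1 := hpent f hf h5
    obtain ⟨v, hv⟩ := Finset.card_pos.mp h1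
    rw [Finset.mem_filter] at hv
    obtain ⟨hvf, e, heM, hve, henf⟩ := hv
    exact ⟨e, heM, henf, v, hve, hvf⟩
  · rintro ⟨e, heM, henf, v, hve, hvf⟩
    rcases hP.faceSize f hf with h5 | h6
    · exact h5
    · exfalso
      have h0 := hnot5 f hf (by omega)
      have hvmem : v ∈ (edgeVerts f).filter (fun v => ∃ e ∈ M, v ∈ e ∧ e ∉ f) :=
        Finset.mem_filter.mpr ⟨hvf, e, heM, hve, henf⟩
      rw [Finset.card_eq_zero] at h0
      rw [h0] at hvmem
      exact absurd hvmem (Finset.notMem_empty v)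

end FG
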